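/- Let d ∈ ℕ, let μ : ℝ → ℝ be continuous and satisfy the monotonicity condition: there exist constants 0 < m ≤ M such that m(t − s) ≤ μ(t²)t − μ(s²)s ≤ M(t − s) for all t ≥ s ≥ 0, and define ψ(s) := (1/2)∫₀^s μ(τ) dτ. Then the function x ↦ ψ(‖x‖²) is strictly convex on the Euclidean space ℝ^d. -/

import Mathlib

/-- If continuous `μ` satisfies the monotonicity condition
`m(t−s) ≤ μ(t²)t − μ(s²)s ≤ M(t−s)` for `t ≥ s ≥ 0` and
`ψ(s) = (1/2)∫₀^s μ(τ) dτ`, then `x ↦ ψ(‖x‖²)` is strictly convex on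
Euclidean space. -/
theorem carreau_potential_strictConvex
    (d : ℕ) (μ : ℝ → ℝ) (hcont : Continuous μ) (m M : ℝ) (hm : 0 < m)
    (hmM : m ≤ M)
    (hμ : ∀ t s : ℝ, 0 ≤ s → s ≤ t →
      m * (t - s) ≤ μ (t ^ 2) * t - μ (s ^ 2) * s ∧
        μ (t ^ 2) * t - μ (s ^ 2) * s ≤ M * (t - s))
    (ψ : ℝ → ℝ) (hψ : ∀ s : ℝ, ψ s = (1 / 2) * ∫ τ in (0 : ℝ)..s, μ τ) :
    StrictConvexOn ℝ Set.univ
      (fun x : EuclideanSpace ℝ (Fin d) => ψ (‖x‖ ^ 2)) := by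
  set g : ℝ → ℝ := fun t => ψ (t ^ 2) with hg
  -- derivative of g
  have hgderiv : ∀ t : ℝ, HasDerivAt g (μ (t ^ 2) * t) t := by
    intro t
    have hint : HasDerivAt (fun u => ∫ τ in (0:ℝ)..u, μ τ) (μ (t ^ 2)) (t ^ 2) :=
      intervalIntegral.integral_hasDerivAt_right (hcont.intervalIntegrable _ _)
        (hcont.stronglyMeasurableAtFilter _ _) hcont.continuousAt
    have hψd : HasDerivAt ψ ((1 / 2) * μ (t ^ 2)) (t ^ 2) := by
      have := (hint.const_mul (1 / 2 : ℝ))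
      simpa [funext hψ] using this
    have hsq : HasDerivAt (fun u : ℝ => u ^ 2) (2 * t) t := by
      simpa [mul_comm] using (hasDerivAt_pow 2 t)
    have hψd' : HasDerivAt ψ ((1 / 2) * μ (t ^ 2)) ((fun u : ℝ => u ^ 2) t) := hψd
    have : HasDerivAt g (1 / 2 * μ (t ^ 2) * (2 * t)) t :=
      HasDerivAt.comp (h := fun u : ℝ => u ^ 2) (x := t) hψd' hsq
    convert this using 1
    ring
  have hgdiff : Differentiable ℝ g := fun t => (hgderiv t).differentiableAt
  have hderiv_eq : ∀ t : ℝ, deriv g t = μ (t ^ 2) * t := fun t => (hgderiv t).deriv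
  -- deriv g strictly monotone on [0,∞)
  have hmono_deriv : StrictMonoOn (deriv g) (interior (Set.Ici (0:ℝ))) := by
    intro s hs t ht hst
    rw [interior_Ici, Set.mem_Ioi] at hs ht
    rw [hderiv_eq, hderiv_eq]
    have h := (hμ t s (le_of_lt hs) (le_of_lt hst)).1
    nlinarith
  -- g strictly convex on [0,∞)
  have hgconv : StrictConvexOn ℝ (Set.Ici (0:ℝ)) g :=
    hmono_deriv.strictConvexOn_of_deriv (convex_Ici 0) hgdiff.continuous.continuousOn
  -- g strictly monotone on [0,∞)
  have hgmono : StrictMonoOn g (Set.Ici (0:ℝ)) := by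
    apply strictMonoOn_of_deriv_pos (convex_Ici 0) hgdiff.continuous.continuousOn
    intro t ht
    rw [interior_Ici, Set.mem_Ioi] at ht
    rw [hderiv_eq]
    have h := (hμ t 0 le_rfl (le_of_lt ht)).1
    nlinarith
  refine ⟨convex_univ, ?_⟩
  intro x _ y _ hxy a b ha hb hab
  have hcombo : ‖a • x + b • y‖ ≤ a * ‖x‖ + b * ‖y‖ := by
    calc ‖a • x + b • y‖ ≤ ‖a • x‖ + ‖b • y‖ := norm_add_le _ _
      _ = a * ‖x‖ + b * ‖y‖ := by
          rw [norm_smul, norm_smul, Real.norm_of_nonneg ha.le, Real.norm_of_nonneg hb.le]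
  have hmemc : ‖a • x + b • y‖ ∈ Set.Ici (0:ℝ) := norm_nonneg _
  have hmemx : ‖x‖ ∈ Set.Ici (0:ℝ) := norm_nonneg _
  have hmemy : ‖y‖ ∈ Set.Ici (0:ℝ) := norm_nonneg _
  show g ‖a • x + b • y‖ < a • g ‖x‖ + b • g ‖y‖
  by_cases hnorm : ‖x‖ = ‖y‖
  · have hlt : ‖a • x + b • y‖ < ‖x‖ :=
      norm_combo_lt_of_ne le_rfl (le_of_eq hnorm.symm) hxy ha hb hab
    have := hgmono hmemc hmemx hlt
    calc g ‖a • x + b • y‖ < g ‖x‖ := this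
      _ = a • g ‖x‖ + b • g ‖y‖ := by
          rw [← hnorm, smul_eq_mul, smul_eq_mul, ← add_mul, hab, one_mul]
  · have h1 : g ‖a • x + b • y‖ ≤ g (a * ‖x‖ + b * ‖y‖) := by
      apply hgmono.monotoneOn hmemc _ hcombo
      have : (0:ℝ) ≤ a * ‖x‖ + b * ‖y‖ := by positivity
      exact this
    have h2 := hgconv.2 hmemx hmemy hnorm ha hb hab
    calc g ‖a • x + b • y‖ ≤ g (a * ‖x‖ + b * ‖y‖) := h1
      _ = g (a • ‖x‖ + b • ‖y‖) := by norm_num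
      _ < a • g ‖x‖ + b • g ‖y‖ := h2
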